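/- Let q be a power of a prime p and let F be a field of characteristic p containing 𝔽_q, complete with respect to a nonarchimedean absolute value |·|. Let α ∈ F with |α| < 1. Then the series x := ∑_{ν=0}^{∞} α^{q^ν} converges in F, it satisfies x − x^q = α and |x| = |α|, and x is the unique element of F with x − x^q = α and |x| < 1. -/

import Mathlib

/-- Let `q = pⁿ` and let `F ⊇ 𝔽_q` be a field of characteristic `p`, complete
with respect to a nonarchimedean absolute value.  Let `α ∈ F` with `|α| < 1`.  Then the series
`x = ∑_ν α^{q^ν}` converges in `F`, it satisfies `x - x^q = α` and `|x| = |α|`, and `x` is the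
unique element with `x - x^q = α` and `|x| < 1`. -/
theorem statement7
    (p n q : ℕ) [Fact p.Prime] (hn : n ≠ 0) (hq : q = p ^ n)
    (F : Type) [NormedField F] [IsUltrametricDist F] [CompleteSpace F] [CharP F p]
    (φ : GaloisField p n →+* F)
    (α : F) (hα : ‖α‖ < 1) :
    ∃ x : F,
      Filter.Tendsto (fun N => ∑ ν ∈ Finset.range N, α ^ q ^ ν) Filter.atTop (nhds x) ∧
      x - x ^ q = α ∧ ‖x‖ = ‖α‖ ∧
      ∀ y : F, y - y ^ q = α → ‖y‖ < 1 → y = x := by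
  have hp : p.Prime := Fact.out
  have hq1 : 1 < q := by
    rw [hq]
    exact Nat.one_lt_pow hn hp.one_lt
  have hq0 : 0 < q := hq1.le.trans_lt' one_pos
  -- the key Frobenius identity
  have hfrob : ∀ a b : F, (a - b) ^ q = a ^ q - b ^ q := by
    intro a b
    rw [hq]
    exact sub_pow_char_pow ..
  set f : ℕ → F := fun ν => α ^ q ^ ν with hf
  -- the terms tend to zero
  have hnorm : ∀ ν, ‖f ν‖ = ‖α‖ ^ q ^ ν := fun ν => norm_pow _ _
  have htend0 : Filter.Tendsto f Filter.atTop (nhds 0) := by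
    rw [tendsto_zero_iff_norm_tendsto_zero]
    simp only [hnorm]
    have h1 : Filter.Tendsto (fun k : ℕ => ‖α‖ ^ k) Filter.atTop (nhds 0) :=
      tendsto_pow_atTop_nhds_zero_of_lt_one (norm_nonneg _) hα
    exact h1.comp (tendsto_pow_atTop_atTop_of_one_lt hq1)
  -- summability
  have hsummable : Summable f := by
    apply NonarchimedeanAddGroup.summable_of_tendsto_cofinite_zero
    rwa [Nat.cofinite_eq_atTop]
  obtain ⟨x, hx⟩ := hsummable
  have htendsto : Filter.Tendsto (fun N => ∑ ν ∈ Finset.range N, α ^ q ^ ν)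
      Filter.atTop (nhds x) := hx.tendsto_sum_nat
  -- partial sum identity
  have hpartial : ∀ N, (∑ ν ∈ Finset.range N, f ν) - (∑ ν ∈ Finset.range N, f ν) ^ q
      = α - α ^ q ^ N := by
    intro N
    have h1 : (∑ ν ∈ Finset.range N, f ν) ^ q = ∑ ν ∈ Finset.range N, f (ν + 1) := by
      rw [hq]
      rw [show (∑ ν ∈ Finset.range N, f ν) ^ p ^ n
        = iterateFrobenius F p n (∑ ν ∈ Finset.range N, f ν) from rfl, map_sum]
      refine Finset.sum_congr rfl fun ν _ => ?_
      rw [iterateFrobenius_def, hf]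
      simp only [← pow_mul, ← pow_succ, ← hq]
    rw [h1, ← Finset.sum_sub_distrib, Finset.sum_range_sub' f]
    simp [hf]
  -- x - x^q = α
  have hxq : x - x ^ q = α := by
    have h1 : Filter.Tendsto (fun N => (∑ ν ∈ Finset.range N, f ν)
        - (∑ ν ∈ Finset.range N, f ν) ^ q) Filter.atTop (nhds (x - x ^ q)) :=
      htendsto.sub (htendsto.pow q)
    have h2 : Filter.Tendsto (fun N => α - α ^ q ^ N) Filter.atTop (nhds (α - 0)) :=
      tendsto_const_nhds.sub htend0
    rw [sub_zero] at h2
    simp only [hpartial] at h1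
    exact tendsto_nhds_unique h1 h2
  -- ‖x - α‖ ≤ ‖α‖^q
  have hxa : ‖x - α‖ ≤ ‖α‖ ^ q := by
    have hev : ∀ᶠ N in Filter.atTop, ‖(∑ ν ∈ Finset.range N, f ν) - α‖ ≤ ‖α‖ ^ q := by
      filter_upwards [Filter.eventually_ge_atTop 1] with N hN
      have : (∑ ν ∈ Finset.range N, f ν) - α = ∑ ν ∈ Finset.Ico 1 N, f ν := by
        rw [Finset.range_eq_Ico, ← Finset.sum_Ico_consecutive f (Nat.zero_le 1) hN]
        simp [hf]
      rw [this]
      refine IsUltrametricDist.norm_sum_le_of_forall_le_of_nonneg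
        (pow_nonneg (norm_nonneg _) _) fun i hi => ?_
      rw [hnorm]
      refine pow_le_pow_of_le_one (norm_nonneg _) hα.le ?_
      calc q = q ^ 1 := (pow_one q).symm
        _ ≤ q ^ i := Nat.pow_le_pow_right hq0 (Finset.mem_Ico.mp hi).1
    exact le_of_tendsto ((htendsto.sub tendsto_const_nhds).norm) hev
  -- ‖x‖ = ‖α‖
  have hxnorm : ‖x‖ = ‖α‖ := by
    rcases eq_or_ne α 0 with rfl | hα0
    · have : ‖x - 0‖ ≤ 0 := by simpa [zero_pow hq0.ne'] using hxa
      simp only [sub_zero] at this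
      rw [norm_le_zero_iff.mp this]
    · have hα0' : 0 < ‖α‖ := norm_pos_iff.mpr hα0
      have hlt : ‖x - α‖ < ‖α‖ := by
        refine hxa.trans_lt ?_
        calc ‖α‖ ^ q < ‖α‖ ^ 1 := pow_lt_pow_right_of_lt_one₀ hα0' hα hq1
          _ = ‖α‖ := pow_one _
      have hne : ‖x - α‖ ≠ ‖α‖ := hlt.ne
      have := IsUltrametricDist.norm_add_eq_max_of_norm_ne_norm (x := x - α) (y := α) hne
      rw [sub_add_cancel] at this
      rw [this, max_eq_right hlt.le]
  refine ⟨x, htendsto, hxq, hxnorm, fun y hy hy1 => ?_⟩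
  -- uniqueness
  by_contra hne
  set z := y - x with hz
  have hz0 : z ≠ 0 := sub_ne_zero.mpr hne
  have hzq : z = z ^ q := by
    rw [hz, hfrob]
    have : y - x - (y ^ q - x ^ q) = (y - y ^ q) - (x - x ^ q) := by ring
    have h2 : y - x = y ^ q - x ^ q + ((y - y ^ q) - (x - x ^ q)) := by ring
    rw [h2, hy, hxq, sub_self, add_zero]
  have hzlt : ‖z‖ < 1 := by
    calc ‖z‖ = ‖y + (-x)‖ := by rw [hz]; ring_nf
    _ ≤ max ‖y‖ ‖-x‖ := IsUltrametricDist.norm_add_le_max _ _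
    _ < 1 := by rw [norm_neg, hxnorm]; exact max_lt hy1 (hxnorm ▸ hα)
  have hzpos : 0 < ‖z‖ := norm_pos_iff.mpr hz0
  have : ‖z‖ < ‖z‖ := by
    conv_lhs => rw [hzq]
    rw [norm_pow]
    calc ‖z‖ ^ q < ‖z‖ ^ 1 := pow_lt_pow_right_of_lt_one₀ hzpos hzlt hq1
      _ = ‖z‖ := pow_one _
  exact absurd this (lt_irrefl _)
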